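/- arXiv:2208.01560 — 2 statements merged into one kernel-verified Lean document; each statement's English description precedes it below -/
import Mathlib

section
/- Suppose each Φᵢ (i = 1,…,k) is a triangular system for (X, cl), and let a ∈ X and B ⊆ X. Then lim_{min(s̄)→∞} rk(Φ^{(s̄)}({a}) | Φ^{(s̄)}(B)) / |Φ^{(s̄)}| equals 0 if a ∈ cl^Φ(B), and equals 1 if a ∉ cl^Φ(B). -/
open Set

/-- A finitary matroid (pregeometry): a closure operator satisfying monotonicity,
idempotence, finite character and Steinitz exchange. -/
structure FinMatroid (X : Type*) where
  cl : Set X → Set X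
  subset_cl : ∀ A : Set X, A ⊆ cl A
  cl_mono : ∀ ⦃A B : Set X⦄, A ⊆ B → cl A ⊆ cl B
  cl_idem : ∀ A : Set X, cl (cl A) = cl A
  cl_finChar : ∀ (A : Set X) (a : X), a ∈ cl A → ∃ A₀ ⊆ A, A₀.Finite ∧ a ∈ cl A₀
  cl_exchange : ∀ (a b : X) (A : Set X), a ∈ cl (A ∪ {b}) → a ∉ cl A → b ∈ cl (A ∪ {a})

namespace FinMatroid

variable {X : Type*}

/-- `B` is `cl`-independent over `A`. -/
def Indep (M : FinMatroid X) (A B : Set X) : Prop :=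
  ∀ b ∈ B, b ∉ M.cl (A ∪ (B \ {b}))

/-- `B₀` is a basis for `B` over `A`. -/
def IsBasisOver (M : FinMatroid X) (A B B₀ : Set X) : Prop :=
  B₀ ⊆ B ∧ M.Indep A B₀ ∧ B ⊆ M.cl (A ∪ B₀)

/-- The rank `rk(B|A)`: the common cardinality of bases of `B` over `A`. -/
noncomputable def rk (M : FinMatroid X) (B A : Set X) : ℕ :=
  sInf {n : ℕ | ∃ B₀ : Set X, M.IsBasisOver A B B₀ ∧ B₀.ncard = n}

end FinMatroid

/-- `ψ` is a triangular system for the finitary matroid `M`. -/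
def Triangular {X : Type*} (M : FinMatroid X) {n : ℕ} (ψ : Fin n → X → X) : Prop :=
  ∀ (i : Fin n) (a : X) (B : Set X), a ∈ M.cl B →
    ψ i a ∈ M.cl (⋃ j ∈ Finset.Iic i, (ψ j) '' B)

/-- `ψ` is quasi-triangular: the system augmented by the identity map is triangular. -/
def QuasiTriangular {X : Type*} (M : FinMatroid X) {n : ℕ} (ψ : Fin n → X → X) : Prop :=
  Triangular M (Fin.cons id ψ)

/-- The composite operator `φ^r̄ = φ₁^{r₁} ∘ ⋯ ∘ φ_m^{r_m}` (operators indexed by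
pairs `(i, j)` with `i : Fin k`, `j : Fin (d i)`). -/
def opPow {X : Type*} {k : ℕ} {d : Fin k → ℕ} (φ : ∀ i : Fin k, Fin (d i) → X → X)
    (r : ∀ i : Fin k, Fin (d i) → ℕ) : X → X :=
  (List.finRange k).foldr
    (fun i f => ((List.finRange (d i)).foldr (fun j g => (φ i j)^[r i j] ∘ g) id) ∘ f) id

/-- The operators pairwise commute. -/
def Commuting {X : Type*} {k : ℕ} {d : Fin k → ℕ}
    (φ : ∀ i : Fin k, Fin (d i) → X → X) : Prop :=
  ∀ i j i' j', Function.Commute (φ i j) (φ i' j')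

/-- `Φ^{(s̄)}(A)`: images of elements of `A` under all `φ^r̄` with `‖r̄‖ = s̄`. -/
def PhiEq {X : Type*} {k : ℕ} {d : Fin k → ℕ} (φ : ∀ i : Fin k, Fin (d i) → X → X)
    (s : Fin k → ℕ) (A : Set X) : Set X :=
  {x | ∃ r : ∀ i : Fin k, Fin (d i) → ℕ,
    (∀ i, ∑ j, r i j = s i) ∧ ∃ a ∈ A, x = opPow φ r a}

/-- `Φ^{≼(s̄)}(A)`: images of elements of `A` under all `φ^r̄` with `‖r̄‖ ≼ s̄`. -/
def PhiLe {X : Type*} {k : ℕ} {d : Fin k → ℕ} (φ : ∀ i : Fin k, Fin (d i) → X → X)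
    (s : Fin k → ℕ) (A : Set X) : Set X :=
  {x | ∃ r : ∀ i : Fin k, Fin (d i) → ℕ,
    (∀ i, ∑ j, r i j ≤ s i) ∧ ∃ a ∈ A, x = opPow φ r a}

/-- `|Φ^{(s̄)}|`: the number of `r̄ ∈ ℕ^m` with `‖r̄‖ = s̄`. -/
noncomputable def cntEq {k : ℕ} (d : Fin k → ℕ) (s : Fin k → ℕ) : ℕ :=
  Nat.card {r : ∀ i : Fin k, Fin (d i) → ℕ // ∀ i, ∑ j, r i j = s i}

/-- `|Φ^{≼(s̄)}|`: the number of `r̄ ∈ ℕ^m` with `‖r̄‖ ≼ s̄`. -/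
noncomputable def cntLe {k : ℕ} (d : Fin k → ℕ) (s : Fin k → ℕ) : ℕ :=
  Nat.card {r : ∀ i : Fin k, Fin (d i) → ℕ // ∀ i, ∑ j, r i j ≤ s i}

/-- `Θ(A)`: images of elements of `A` under all the operators `φ^r̄`, `r̄ ∈ ℕ^m`. -/
def Theta {X : Type*} {k : ℕ} {d : Fin k → ℕ} (φ : ∀ i : Fin k, Fin (d i) → X → X)
    (A : Set X) : Set X :=
  {x | ∃ r : ∀ i : Fin k, Fin (d i) → ℕ, ∃ a ∈ A, x = opPow φ r a}

/-- The `Φ`-closure operator. -/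
noncomputable def clPhi {X : Type*} {k : ℕ} {d : Fin k → ℕ} (M : FinMatroid X)
    (φ : ∀ i : Fin k, Fin (d i) → X → X) (B : Set X) : Set X :=
  {a | ∃ s : Fin k → ℕ, M.rk (PhiEq φ s {a}) (PhiEq φ s B) < cntEq d s}

/-- The `Φ*`-closure operator. -/
noncomputable def clPhiStar {X : Type*} {k : ℕ} {d : Fin k → ℕ} (M : FinMatroid X)
    (φ : ∀ i : Fin k, Fin (d i) → X → X) (B : Set X) : Set X :=
  {a | ∃ s : Fin k → ℕ, M.rk (PhiLe φ s {a}) (PhiLe φ s B) < cntLe d s}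

/-- View a function `Fin k → ℕ` as a monomial exponent. -/
noncomputable def expOf {k : ℕ} (e : Fin k → ℕ) : Fin k →₀ ℕ :=
  Finsupp.equivFunOnFinite.symm e

namespace FinMatroid
variable {X : Type*} (M : FinMatroid X)

lemma cl_subset_cl {A B : Set X} (h : A ⊆ M.cl B) : M.cl A ⊆ M.cl B := by
  have := M.cl_mono h
  rwa [M.cl_idem] at this

lemma mem_cl_of_mem {A : Set X} {x : X} (hx : x ∈ A) : x ∈ M.cl A := M.subset_cl A hx

/-- Exchange: pick a swap element from a finite spanning set. -/
lemma exists_exchange {A B' : Set X} (hB' : B'.Finite) {x : X}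
    (hx : x ∈ M.cl (A ∪ B')) (hnx : x ∉ M.cl A) :
    ∃ y ∈ B', y ∈ M.cl ((A ∪ {x}) ∪ (B' \ {y})) := by
  classical
  set P : ℕ → Prop := fun n => ∃ C, C ⊆ B' ∧ x ∈ M.cl (A ∪ C) ∧ C.ncard = n with hP
  have hPB : P B'.ncard := ⟨B', le_refl _, hx, rfl⟩
  have hmem : sInf {n | P n} ∈ {n | P n} := Nat.sInf_mem ⟨_, hPB⟩
  obtain ⟨C, hCB, hxC, hCcard⟩ : P (sInf {n | P n}) := hmem
  have hCfin : C.Finite := hB'.subset hCB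
  have hCne : C.Nonempty := by
    rcases C.eq_empty_or_nonempty with h | h
    · exfalso; apply hnx; simpa [h] using hxC
    · exact h
  obtain ⟨y, hyC⟩ := hCne
  have hmin : x ∉ M.cl (A ∪ (C \ {y})) := by
    intro hbad
    have hPd : P (C \ {y}).ncard := ⟨C \ {y}, (diff_subset).trans hCB, hbad, rfl⟩
    have hlt : (C \ {y}).ncard < C.ncard := Set.ncard_diff_singleton_lt_of_mem hyC hCfin
    have := Nat.sInf_le (show (C \ {y}).ncard ∈ {n | P n} from hPd)
    omega
  have hsplit : A ∪ C = (A ∪ (C \ {y})) ∪ {y} := by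
    ext z; simp only [mem_union, mem_diff, mem_singleton_iff]
    constructor
    · rintro (hz | hz)
      · exact Or.inl (Or.inl hz)
      · by_cases hzy : z = y
        · exact Or.inr hzy
        · exact Or.inl (Or.inr ⟨hz, hzy⟩)
    · rintro ((hz | ⟨hz, _⟩) | rfl)
      · exact Or.inl hz
      · exact Or.inr hz
      · exact Or.inr hyC
  have hxy : x ∈ M.cl ((A ∪ (C \ {y})) ∪ {y}) := by rwa [hsplit] at hxC
  have hy := M.cl_exchange x y _ hxy hmin
  refine ⟨y, hCB hyC, ?_⟩
  refine M.cl_mono ?_ hy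
  intro z hz
  simp only [mem_union, mem_diff, mem_singleton_iff] at hz ⊢
  rcases hz with ((hz | ⟨hz1, hz2⟩) | rfl)
  · exact Or.inl (Or.inl hz)
  · exact Or.inr ⟨hCB hz1, hz2⟩
  · exact Or.inl (Or.inr rfl)

/-- Bases of finite sets exist. -/
lemma exists_basis (A : Set X) : ∀ (n : ℕ) (B : Set X), B.Finite → B.ncard ≤ n →
    ∃ B₀, M.IsBasisOver A B B₀ ∧ B₀.Finite := by
  classical
  intro n
  induction n with
  | zero =>
    intro B hBfin hB0
    have : B = ∅ := by
      have := Set.ncard_eq_zero hBfin |>.mp (le_antisymm hB0 (Nat.zero_le _))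
      exact this
    subst this
    exact ⟨∅, ⟨le_refl _, fun b hb => absurd hb (by simp), by simp⟩, finite_empty⟩
  | succ n ih =>
    intro B hBfin hBcard
    by_cases hind : M.Indep A B
    · exact ⟨B, ⟨le_refl _, hind, fun b hb => M.subset_cl _ (Or.inr hb)⟩, hBfin⟩
    · simp only [Indep, not_forall] at hind
      obtain ⟨b, hbB, hbcl⟩ := hind
      have hbcl' : b ∈ M.cl (A ∪ (B \ {b})) := not_not.mp hbcl
      have hcard : (B \ {b}).ncard ≤ n := by
        have := Set.ncard_diff_singleton_lt_of_mem hbB hBfin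
        omega
      obtain ⟨B₀, ⟨hsub, hindep, hspan⟩, hfin⟩ := ih (B \ {b}) hBfin.diff hcard
      refine ⟨B₀, ⟨hsub.trans diff_subset, hindep, ?_⟩, hfin⟩
      intro z hz
      by_cases hzb : z = b
      · subst hzb
        refine M.cl_subset_cl ?_ hbcl'
        intro w hw
        rcases hw with hw | hw
        · exact M.subset_cl _ (Or.inl hw)
        · exact hspan hw
      · exact hspan ⟨hz, hzb⟩

/-- Key chain lemma: an "echelon" family (each member outside the closure of the
lower-L members) injects cardinality-wise into any spanning set. -/
lemma chain_card_le {ι : Type*} (W : Set X) (x : ι → X) (L : ι → ℕ) :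
    ∀ (R : Finset ι), Set.InjOn L R →
    (∀ r ∈ R, x r ∉ M.cl (W ∪ {z | ∃ q ∈ R, L q < L r ∧ z = x q})) →
    ∀ (B₀ : Set X), B₀.Finite → (∀ r ∈ R, x r ∈ M.cl (W ∪ B₀)) →
    ∃ B' ⊆ B₀, B₀ ⊆ M.cl ((W ∪ {z | ∃ q ∈ R, z = x q}) ∪ B') ∧ B'.ncard + R.card ≤ B₀.ncard := by
  classical
  intro R
  induction R using Finset.strongInduction with
  | _ R ihR =>
    intro hinj hndep B₀ hB₀fin hspan
    rcases R.eq_empty_or_nonempty with rfl | hRne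
    · exact ⟨B₀, le_refl _, fun z hz => M.subset_cl _ (Or.inr hz), by simp⟩
    · obtain ⟨rs, hrsR, hrsmax⟩ := R.exists_max_image L hRne
      set R' := R.erase rs with hR'
      have hR'lt : R' ⊂ R := Finset.erase_ssubset hrsR
      have hL' : ∀ q ∈ R', L q < L rs := by
        intro q hq
        have h1 := hrsmax q (Finset.mem_of_mem_erase hq)
        have h2 : q ≠ rs := Finset.ne_of_mem_erase hq
        have h3 : L q ≠ L rs := fun h => h2 (hinj (Finset.mem_coe.mpr (Finset.mem_of_mem_erase hq)) (Finset.mem_coe.mpr hrsR) h)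
        omega
      obtain ⟨B', hB'sub, hB'span, hB'card⟩ :=
        ihR R' hR'lt (hinj.mono (by exact_mod_cast Finset.coe_subset.mpr (Finset.erase_subset _ _)))
          (by
            intro r hr
            have := hndep r (Finset.mem_of_mem_erase hr)
            intro hbad
            apply this
            refine M.cl_mono ?_ hbad
            apply union_subset_union_right
            rintro z ⟨q, hq, hqL, rfl⟩
            exact ⟨q, Finset.mem_of_mem_erase hq, hqL, rfl⟩)
          B₀ hB₀fin (fun r hr => hspan r (Finset.mem_of_mem_erase hr))
      -- now exchange the element x rs into B'
      have hB'fin : B'.Finite := hB₀fin.subset hB'sub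
      set A' : Set X := W ∪ {z | ∃ q ∈ R', z = x q} with hA'
      have hxrs_in : x rs ∈ M.cl (A' ∪ B') := by
        have h1 : x rs ∈ M.cl (W ∪ B₀) := hspan rs hrsR
        refine M.cl_subset_cl ?_ h1
        intro z hz
        rcases hz with hz | hz
        · exact M.subset_cl _ (Or.inl (Or.inl hz))
        · exact hB'span hz
      have hxrs_out : x rs ∉ M.cl A' := by
        intro hbad
        apply hndep rs hrsR
        refine M.cl_mono ?_ hbad
        apply union_subset_union_right
        rintro z ⟨q, hq, rfl⟩
        exact ⟨q, Finset.mem_of_mem_erase hq, hL' q hq, rfl⟩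
      obtain ⟨y, hyB', hyex⟩ := M.exists_exchange hB'fin hxrs_in hxrs_out
      refine ⟨B' \ {y}, (diff_subset).trans hB'sub, ?_, ?_⟩
      · -- spanning
        have hkey : (A' ∪ {x rs}) ∪ (B' \ {y}) ⊆ (W ∪ {z | ∃ q ∈ R, z = x q}) ∪ (B' \ {y}) := by
          intro z hz
          rcases hz with (hz | hz) | hz
          · rcases hz with hz | ⟨q, hq, rfl⟩
            · exact Or.inl (Or.inl hz)
            · exact Or.inl (Or.inr ⟨q, Finset.mem_of_mem_erase hq, rfl⟩)
          · rcases hz with rfl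
            exact Or.inl (Or.inr ⟨rs, hrsR, rfl⟩)
          · exact Or.inr hz
        have hy' : y ∈ M.cl ((W ∪ {z | ∃ q ∈ R, z = x q}) ∪ (B' \ {y})) := M.cl_mono hkey hyex
        intro z hzB₀
        have hz1 : z ∈ M.cl (A' ∪ B') := by
          have := hB'span hzB₀
          exact this
        refine M.cl_subset_cl ?_ hz1
        intro w hw
        rcases hw with hw | hw
        · rcases hw with hw | ⟨q, hq, rfl⟩
          · exact M.subset_cl _ (Or.inl (Or.inl hw))
          · exact M.subset_cl _ (Or.inl (Or.inr ⟨q, Finset.mem_of_mem_erase hq, rfl⟩))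
        · by_cases hwy : w = y
          · subst hwy; exact hy'
          · exact M.subset_cl _ (Or.inr ⟨hw, hwy⟩)
      · -- cardinality
        have h1 : (B' \ {y}).ncard = B'.ncard - 1 := Set.ncard_diff_singleton_of_mem hyB'
        have h2 : 0 < B'.ncard := (Set.ncard_pos hB'fin).mpr ⟨y, hyB'⟩
        have h3 : R'.card = R.card - 1 := Finset.card_erase_of_mem hrsR
        have h4 : 1 ≤ R.card := Finset.card_pos.mpr hRne
        omega

/-- Final form: a chain bounds the rank from below. -/
lemma card_le_ncard_basis {ι : Type*} (W : Set X) (x : ι → X) (L : ι → ℕ)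
    (R : Finset ι) (hinj : Set.InjOn L R)
    (hndep : ∀ r ∈ R, x r ∉ M.cl (W ∪ {z | ∃ q ∈ R, L q < L r ∧ z = x q}))
    (B₀ : Set X) (hB₀fin : B₀.Finite) (hspan : ∀ r ∈ R, x r ∈ M.cl (W ∪ B₀)) :
    R.card ≤ B₀.ncard := by
  obtain ⟨B', _, _, hcard⟩ := M.chain_card_le W x L R hinj hndep B₀ hB₀fin hspan
  omega

end FinMatroid



section Counting

lemma list_sum_range (f : ℕ → ℕ) : ∀ n : ℕ, ((List.range n).map f).sum = ∑ i ∈ Finset.range n, f i := by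
  intro n
  induction n with
  | zero => simp
  | succ n ih => rw [List.range_succ, List.map_append, List.sum_append, Finset.sum_range_succ, ih]; simp

lemma sum_shift_choose (k : ℕ) : ∀ n : ℕ, ∑ j ∈ Finset.range (n+1), (j + k).choose k = (n + k + 1).choose (k+1) := by
  intro n
  induction n with
  | zero => simp
  | succ n ih =>
    rw [Finset.sum_range_succ, ih]
    have h2 : n + 1 + k = n + k + 1 := by omega
    rw [h2]
    have hp := Nat.choose_succ_succ (n+k+1) k
    simp only [Nat.succ_eq_add_one] at hp
    omega

lemma antidiagTuple_len : ∀ (k n : ℕ), (List.Nat.antidiagonalTuple (k+1) n).length = (n + k).choose k := by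
  intro k
  induction k with
  | zero => intro n; rw [List.Nat.antidiagonalTuple_one]; simp
  | succ k ih =>
    intro n
    have hdef : List.Nat.antidiagonalTuple (k+2) n
        = (List.Nat.antidiagonal n).flatMap
          (fun ni : ℕ × ℕ => (List.Nat.antidiagonalTuple (k+1) ni.2).map
            (fun x : Fin (k+1) → ℕ => (Fin.cons ni.1 x : Fin (k+2) → ℕ))) := rfl
    rw [hdef, List.length_flatMap]
    have hanti : List.Nat.antidiagonal n = (List.range (n+1)).map fun i => (i, n - i) := rfl
    rw [hanti, List.map_map]
    have hmap : ((List.length ∘ fun ni : ℕ × ℕ =>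
          (List.Nat.antidiagonalTuple (k+1) ni.2).map
            (fun x : Fin (k+1) → ℕ => (Fin.cons ni.1 x : Fin (k+2) → ℕ))) ∘ fun i : ℕ => (i, n - i))
        = fun i => (List.Nat.antidiagonalTuple (k+1) (n - i)).length := by
      funext i; simp
    erw [hmap, list_sum_range]
    calc ∑ i ∈ Finset.range (n+1), (List.Nat.antidiagonalTuple (k+1) (n-i)).length
        = ∑ i ∈ Finset.range (n+1), (n - i + k).choose k := Finset.sum_congr rfl (fun i _ => ih (n-i))
      _ = ∑ j ∈ Finset.range (n+1), (j + k).choose k := by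
          rw [← Finset.sum_range_reflect (fun j => (j + k).choose k) (n+1)]
          exact Finset.sum_congr rfl (fun j _ => by norm_num)
      _ = (n + k + 1).choose (k+1) := sum_shift_choose k n

lemma antidiagTuple_card (k n : ℕ) : (Finset.Nat.antidiagonalTuple (k+1) n).card = (n + k).choose k :=
  antidiagTuple_len k n

/-- counting block: `Nat.card` version -/
lemma card_block (k n : ℕ) : Nat.card {f : Fin (k+1) → ℕ // ∑ j, f j = n} = (n + k).choose k := by
  classical
  letI : Fintype {f : Fin (k+1) → ℕ // ∑ j, f j = n} :=
    Fintype.subtype (Finset.Nat.antidiagonalTuple (k+1) n) (fun x => Finset.Nat.mem_antidiagonalTuple)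
  rw [Nat.card_eq_fintype_card]
  rw [Fintype.card_of_subtype (Finset.Nat.antidiagonalTuple (k+1) n) (fun x => Finset.Nat.mem_antidiagonalTuple)]
  exact antidiagTuple_card k n

lemma finite_block (k n : ℕ) : Finite {f : Fin k → ℕ // ∑ j, f j = n} := by
  classical
  letI : Fintype {f : Fin k → ℕ // ∑ j, f j = n} :=
    Fintype.subtype (Finset.Nat.antidiagonalTuple k n) (fun x => Finset.Nat.mem_antidiagonalTuple)
  infer_instance

end Counting


section BigCount

variable {k : ℕ} {d : Fin k → ℕ}

lemma finite_bigtype (s : Fin k → ℕ) :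
    Finite {r : ∀ i : Fin k, Fin (d i) → ℕ // ∀ i, ∑ j, r i j = s i} := by
  haveI : ∀ i, Finite {f : Fin (d i) → ℕ // ∑ j, f j = s i} := fun i => finite_block _ _
  exact Finite.of_equiv _ (Equiv.subtypePiEquivPi (β := fun i => Fin (d i) → ℕ)
    (p := fun i f => ∑ j, f j = s i)).symm

lemma card_block' (m n : ℕ) (hm : 0 < m) :
    Nat.card {f : Fin m → ℕ // ∑ j, f j = n} = (n + (m-1)).choose (m-1) := by
  obtain ⟨e, rfl⟩ : ∃ e, m = e + 1 := ⟨m - 1, by omega⟩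
  simpa using card_block e n

lemma cntEq_eq_prod (hd : ∀ i, 0 < d i) (s : Fin k → ℕ) :
    cntEq d s = ∏ i, (s i + (d i - 1)).choose (d i - 1) := by
  unfold cntEq
  rw [Nat.card_congr (Equiv.subtypePiEquivPi (β := fun i => Fin (d i) → ℕ)
    (p := fun i f => ∑ j, f j = s i))]
  rw [Nat.card_pi]
  exact Finset.prod_congr rfl fun i _ => card_block' (d i) (s i) (hd i)

lemma cntEq_pos (hd : ∀ i, 0 < d i) (s : Fin k → ℕ) : 0 < cntEq d s := by
  rw [cntEq_eq_prod hd s]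
  exact Finset.prod_pos fun i _ => Nat.choose_pos (by omega)

end BigCount

section Ratio

lemma factor_ineq (a b l N U V : ℕ) (hl : 1 ≤ l) (hb : b ≤ U) (hUV : V + U = N + 1)
    (hNs : N ≤ a + b) : (a + b + l) * V ≤ (a + l) * (N+1) := by
  have hVa : V ≤ a + l := by omega
  have h1 : b * V ≤ U * (a + l) := Nat.mul_le_mul hb hVa
  nlinarith

lemma block_ratio (e a b N U V : ℕ) (hb : b ≤ U) (hUV : V + U = N + 1) (hNs : N ≤ a + b) :
    (a + b + e).choose e * V^e ≤ (a + e).choose e * (N+1)^e := by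
  have key : ∀ x : ℕ, (x + e).descFactorial e = ∏ i ∈ Finset.range e, (x + (e - i)) := by
    intro x
    rw [Nat.descFactorial_eq_prod_range]
    exact Finset.prod_congr rfl fun i hi => by
      have := Finset.mem_range.mp hi; omega
  have prodineq : (∏ i ∈ Finset.range e, (a + b + (e - i))) * V^e
      ≤ (∏ i ∈ Finset.range e, (a + (e - i))) * (N+1)^e := by
    have hV : V ^ e = ∏ _i ∈ Finset.range e, V := by rw [Finset.prod_const, Finset.card_range]
    have hN1 : (N+1) ^ e = ∏ _i ∈ Finset.range e, (N+1) := by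
      rw [Finset.prod_const, Finset.card_range]
    rw [hV, hN1, ← Finset.prod_mul_distrib, ← Finset.prod_mul_distrib]
    refine Finset.prod_le_prod' fun i hi => ?_
    have hi' := Finset.mem_range.mp hi
    exact factor_ineq a b (e - i) N U V (by omega) hb hUV hNs
  have d1 : (a + b + e).descFactorial e = e.factorial * (a + b + e).choose e :=
    Nat.descFactorial_eq_factorial_mul_choose _ _
  have d2 : (a + e).descFactorial e = e.factorial * (a + e).choose e :=
    Nat.descFactorial_eq_factorial_mul_choose _ _
  rw [← key, ← key, d1, d2] at prodineq
  have hfac : 0 < e.factorial := Nat.factorial_pos e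
  calc (a + b + e).choose e * V^e
      = (e.factorial * ((a + b + e).choose e * V^e)) / e.factorial := by
        rw [Nat.mul_div_cancel_left _ hfac]
    _ ≤ (e.factorial * ((a + e).choose e * (N+1)^e)) / e.factorial := by
        apply Nat.div_le_div_right
        calc e.factorial * ((a + b + e).choose e * V^e)
            = e.factorial * (a + b + e).choose e * V^e := by ring
          _ ≤ e.factorial * (a + e).choose e * (N+1)^e := prodineq
          _ = e.factorial * ((a + e).choose e * (N+1)^e) := by ring
    _ = (a + e).choose e * (N+1)^e := Nat.mul_div_cancel_left _ hfac

lemma cnt_ratio {k : ℕ} {d : Fin k → ℕ} (hd : ∀ i, 0 < d i) (s₀ s' : Fin k → ℕ)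
    (N U V : ℕ) (hU : ∀ i, s₀ i ≤ U) (hUV : V + U = N + 1)
    (hN : ∀ i, N ≤ s' i + s₀ i) :
    cntEq d (fun i => s' i + s₀ i) * V ^ (∑ i, (d i - 1))
      ≤ cntEq d s' * (N+1) ^ (∑ i, (d i - 1)) := by
  rw [cntEq_eq_prod hd, cntEq_eq_prod hd]
  rw [← Finset.prod_pow_eq_pow_sum, ← Finset.prod_pow_eq_pow_sum,
    ← Finset.prod_mul_distrib, ← Finset.prod_mul_distrib]
  refine Finset.prod_le_prod' fun i _ => ?_
  exact block_ratio (d i - 1) (s' i) (s₀ i) N U V (hU i) hUV (hN i)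

end Ratio


section Foldr
variable {X : Type*} {ι : Type*}

lemma foldr_congr (l : List ι) (F F' : ι → X → X) (h : ∀ i ∈ l, F i = F' i) :
    l.foldr (fun i f => F i ∘ f) id = l.foldr (fun i f => F' i ∘ f) id := by
  induction l with
  | nil => rfl
  | cons a t ih =>
    simp only [List.foldr_cons]
    rw [h a (List.mem_cons_self), ih (fun i hi => h i (List.mem_cons_of_mem a hi))]

lemma foldr_comm (l : List ι) (F : ι → X → X) (g : X → X)
    (h : ∀ i ∈ l, ∀ x, F i (g x) = g (F i x)) :
    ∀ x, l.foldr (fun i f => F i ∘ f) id (g x) = g (l.foldr (fun i f => F i ∘ f) id x) := by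
  induction l with
  | nil => intro x; rfl
  | cons a t ih =>
    intro x
    simp only [List.foldr_cons, Function.comp_apply]
    rw [ih (fun i hi => h i (List.mem_cons_of_mem a hi)) x]
    exact h a (List.mem_cons_self) _

lemma foldr_update (l : List ι) (hl : l.Nodup) (i : ι) (hi : i ∈ l) (F F' : ι → X → X)
    (g : X → X)
    (hcm : ∀ i' ∈ l, ∀ x, F i' (g x) = g (F i' x))
    (hFi : ∀ x, F' i x = g (F i x))
    (hFne : ∀ i' ∈ l, i' ≠ i → F' i' = F i') :
    ∀ x, l.foldr (fun i' f => F' i' ∘ f) id x = g (l.foldr (fun i' f => F i' ∘ f) id x) := by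
  induction l with
  | nil => exact absurd hi List.not_mem_nil
  | cons a t ih =>
    intro x
    rcases List.nodup_cons.mp hl with ⟨hat, htnd⟩
    simp only [List.foldr_cons, Function.comp_apply]
    by_cases hai : a = i
    · subst hai
      have ht : t.foldr (fun i' f => F' i' ∘ f) id = t.foldr (fun i' f => F i' ∘ f) id :=
        foldr_congr t F' F (fun i' hi' => hFne i' (List.mem_cons_of_mem a hi')
          (fun h => hat (h ▸ hi')))
      rw [ht, hFi]
    · have hit : i ∈ t := by
        rcases hi with _ | h
        · exact absurd rfl hai
        · assumption
      rw [ih htnd hit (fun i' hi' => hcm i' (List.mem_cons_of_mem a hi'))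
        (fun i' hi' hne => hFne i' (List.mem_cons_of_mem a hi') hne) x]
      rw [hFne a (List.mem_cons_self) hai]
      exact hcm a (List.mem_cons_self) _

end Foldr

section OpPow
variable {X : Type*} {k : ℕ} {d : Fin k → ℕ} (φ : ∀ i : Fin k, Fin (d i) → X → X)

lemma iter_comm {f g : X → X} (h : ∀ x, f (g x) = g (f x)) :
    ∀ (n : ℕ) (x : X), f^[n] (g x) = g (f^[n] x) := by
  intro n
  induction n with
  | zero => intro x; rfl
  | succ n ih =>
    intro x
    rw [Function.iterate_succ_apply', Function.iterate_succ_apply', ih, h]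

/-- The inner block composite. -/
def inner (i : Fin k) (c : Fin (d i) → ℕ) : X → X :=
  (List.finRange (d i)).foldr (fun j g => (φ i j)^[c j] ∘ g) id

lemma opPow_eq_foldr (r : ∀ i, Fin (d i) → ℕ) :
    opPow φ r = (List.finRange k).foldr (fun i f => inner φ i (r i) ∘ f) id := rfl

lemma inner_comm_phi (hcomm : Commuting φ) (i' : Fin k) (c : Fin (d i') → ℕ) (i : Fin k) (j : Fin (d i)) :
    ∀ x, inner φ i' c (φ i j x) = φ i j (inner φ i' c x) := by
  apply foldr_comm
  intro j' _ x
  exact iter_comm (fun y => (hcomm i' j' i j y)) (c j') x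

/-- increment of an exponent at one coordinate -/
def incr [DecidableEq (Fin k)] (r : ∀ i, Fin (d i) → ℕ) (i : Fin k) (j : Fin (d i)) :
    ∀ i', Fin (d i') → ℕ :=
  Function.update r i (Function.update (r i) j (r i j + 1))

lemma inner_update (hcomm : Commuting φ) (i : Fin k) (j : Fin (d i)) (c : Fin (d i) → ℕ) :
    ∀ x, inner φ i (Function.update c j (c j + 1)) x = φ i j (inner φ i c x) := by
  classical
  apply foldr_update (List.finRange (d i)) (List.nodup_finRange _) j (List.mem_finRange j)
    (fun j' => (φ i j')^[c j']) (fun j' => (φ i j')^[Function.update c j (c j + 1) j'])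
    (φ i j)
  · intro j' _ x
    exact iter_comm (fun y => (hcomm i j' i j y)) (c j') x
  · intro x
    rw [Function.update_self]
    exact Function.iterate_succ_apply' (φ i j) (c j) x
  · intro j' _ hne
    rw [Function.update_of_ne hne]

lemma opPow_incr (hcomm : Commuting φ) [DecidableEq (Fin k)] (r : ∀ i, Fin (d i) → ℕ) (i : Fin k) (j : Fin (d i)) :
    ∀ x, opPow φ (incr r i j) x = φ i j (opPow φ r x) := by
  classical
  rw [opPow_eq_foldr, opPow_eq_foldr]
  apply foldr_update (List.finRange k) (List.nodup_finRange _) i (List.mem_finRange i)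
    (fun i' => inner φ i' (r i')) (fun i' => inner φ i' (incr r i j i')) (φ i j)
  · intro i' _ x
    exact inner_comm_phi φ hcomm i' (r i') i j x
  · intro x
    have h1 : incr r i j i = Function.update (r i) j (r i j + 1) := Function.update_self _ _ _
    rw [h1]
    exact inner_update φ hcomm i j (r i) x
  · intro i' _ hne
    have h1 : incr r i j i' = r i' := Function.update_of_ne hne _ _
    rw [h1]

end OpPow

section Weights
variable {k : ℕ} {d : Fin k → ℕ}

/-- the norm: blockwise sums -/
def nrmE (r : ∀ i : Fin k, Fin (d i) → ℕ) : Fin k → ℕ := fun i => ∑ j, r i j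

lemma sum_update_succ {m : ℕ} (c : Fin m → ℕ) (j : Fin m) :
    ∑ j', Function.update c j (c j + 1) j' = (∑ j', c j') + 1 := by
  classical
  rw [Finset.sum_update_of_mem (Finset.mem_univ j)]
  have h2 : ∑ j', c j' = c j + ∑ x ∈ Finset.univ \ {j}, c x := by
    rw [Finset.sum_eq_sum_sdiff_singleton_add (Finset.mem_univ j)]
    omega
  omega

lemma nrmE_incr [DecidableEq (Fin k)] (r : ∀ i, Fin (d i) → ℕ) (i : Fin k) (j : Fin (d i)) :
    nrmE (incr r i j) = Function.update (nrmE r) i (nrmE r i + 1) := by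
  classical
  funext i'
  by_cases hii : i' = i
  · subst hii
    show ∑ j', (incr r i' j) i' j' = _
    have h1 : incr r i' j i' = Function.update (r i') j (r i' j + 1) := Function.update_self _ _ _
    rw [h1, sum_update_succ, Function.update_self]
    rfl
  · show ∑ j', (incr r i j) i' j' = _
    have h1 : incr r i j i' = r i' := Function.update_of_ne hii _ _
    rw [h1, Function.update_of_ne hii]
    rfl

/-- a linear weight functional -/
def Lw (c : ∀ i : Fin k, Fin (d i) → ℕ) (r : ∀ i : Fin k, Fin (d i) → ℕ) : ℕ :=
  ∑ i, ∑ j, r i j * c i j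

lemma Lw_incr [DecidableEq (Fin k)] (c : ∀ i : Fin k, Fin (d i) → ℕ)
    (r : ∀ i, Fin (d i) → ℕ) (i : Fin k) (j : Fin (d i)) :
    Lw c (incr r i j) = Lw c r + c i j := by
  classical
  unfold Lw
  have hi : ∑ j', incr r i j i j' * c i j' = (∑ j', r i j' * c i j') + c i j := by
    have h1 : incr r i j i = Function.update (r i) j (r i j + 1) := Function.update_self _ _ _
    rw [h1]
    have hfun : (fun j' => Function.update (r i) j (r i j + 1) j' * c i j')
        = Function.update (fun j' => r i j' * c i j') j ((r i j + 1) * c i j) := by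
      funext j'
      by_cases hjj : j' = j
      · subst hjj; rw [Function.update_self, Function.update_self]
      · rw [Function.update_of_ne hjj, Function.update_of_ne hjj]
    calc ∑ j', Function.update (r i) j (r i j + 1) j' * c i j'
        = ∑ j', Function.update (fun j' => r i j' * c i j') j ((r i j + 1) * c i j) j' := by
          rw [hfun]
      _ = (r i j + 1) * c i j + ∑ x ∈ Finset.univ \ {j}, r i x * c i x :=
          Finset.sum_update_of_mem (Finset.mem_univ j) _ _
      _ = (∑ j', r i j' * c i j') + c i j := by
          rw [Finset.sum_eq_sum_sdiff_singleton_add (Finset.mem_univ j) (fun j' => r i j' * c i j')]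
          have : (r i j + 1) * c i j = r i j * c i j + c i j := by ring
          omega
  have houter : (fun i' => ∑ j', incr r i j i' j' * c i' j')
      = Function.update (fun i' => ∑ j', r i' j' * c i' j') i ((∑ j', r i j' * c i j') + c i j) := by
    funext i'
    by_cases hii : i' = i
    · subst hii; rw [Function.update_self]; exact hi
    · rw [Function.update_of_ne hii]
      have h1 : incr r i j i' = r i' := Function.update_of_ne hii _ _
      rw [h1]
  calc ∑ i', ∑ j', incr r i j i' j' * c i' j'
      = ∑ i', Function.update (fun i' => ∑ j', r i' j' * c i' j') i
          ((∑ j', r i j' * c i j') + c i j) i' := by rw [houter]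
    _ = (∑ j', r i j' * c i j') + c i j + ∑ x ∈ Finset.univ \ {i}, ∑ j', r x j' * c x j' :=
        Finset.sum_update_of_mem (Finset.mem_univ i) _ _
    _ = (∑ i', ∑ j', r i' j' * c i' j') + c i j := by
        rw [Finset.sum_eq_sum_sdiff_singleton_add (Finset.mem_univ i)
          (fun i' => ∑ j', r i' j' * c i' j')]
        omega

end Weights

section Digits

lemma geom_nat (b : ℕ) (hb : 1 ≤ b) : ∀ p : ℕ, ∑ t ∈ Finset.range p, (b-1) * b^t = b^p - 1 := by
  intro p
  induction p with
  | zero => simp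
  | succ p ih =>
    rw [Finset.sum_range_succ, ih]
    have h1 : 1 ≤ b^p := Nat.one_le_pow _ _ hb
    have h2 : (b-1) * b^p = b^(p+1) - b^p := by
      rw [Nat.sub_mul, one_mul, pow_succ, Nat.mul_comm]
    have h3 : b^p ≤ b^(p+1) := Nat.pow_le_pow_right hb (by omega)
    omega

lemma sum_lt_pow {ι : Type*} [DecidableEq ι] (s : Finset ι) (pos : ι → ℕ)
    (hposinj : Set.InjOn pos s) (p : ℕ) (hlt : ∀ x ∈ s, pos x < p)
    (dig : ι → ℕ) (b : ℕ) (hb : 1 ≤ b) (hd : ∀ x ∈ s, dig x < b) :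
    ∑ x ∈ s, dig x * b^(pos x) < b^p := by
  have h1 : ∑ x ∈ s, dig x * b^(pos x) ≤ ∑ x ∈ s, (b-1) * b^(pos x) := by
    refine Finset.sum_le_sum fun x hx => Nat.mul_le_mul_right _ (by have := hd x hx; omega)
  have h2 : ∑ x ∈ s, (b-1) * b^(pos x) = ∑ t ∈ s.image pos, (b-1) * b^t := by
    rw [Finset.sum_image (fun x hx y hy hxy => hposinj hx hy hxy)]
  have h3 : ∑ t ∈ s.image pos, (b-1) * b^t ≤ ∑ t ∈ Finset.range p, (b-1) * b^t := by
    refine Finset.sum_le_sum_of_subset ?_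
    intro t ht
    obtain ⟨x, hx, rfl⟩ := Finset.mem_image.mp ht
    exact Finset.mem_range.mpr (hlt x hx)
  have h4 := geom_nat b hb p
  have h5 : 1 ≤ b^p := Nat.one_le_pow _ _ hb
  omega

lemma digit_core {ι : Type*} [Fintype ι] [DecidableEq ι] {b : ℕ} (hb : 1 ≤ b)
    (pos : ι → ℕ) (hpos : Function.Injective pos) (g h : ι → ℕ)
    (hg : ∀ x, g x < b) (heq : ∑ x, g x * b^(pos x) = ∑ x, h x * b^(pos x))
    (x : ι) (hgh : g x < h x) (hmax : ∀ y, g y ≠ h y → pos y ≤ pos x) : False := by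
  classical
  set D : Finset ι := Finset.univ.filter (fun y => g y ≠ h y) with hD
  have hxD : x ∈ D := Finset.mem_filter.mpr ⟨Finset.mem_univ x, by omega⟩
  have hsplitg := Finset.sum_filter_add_sum_filter_not Finset.univ (fun y => g y ≠ h y)
    (fun y => g y * b^(pos y))
  have hsplith := Finset.sum_filter_add_sum_filter_not Finset.univ (fun y => g y ≠ h y)
    (fun y => h y * b^(pos y))
  have hcompl : ∑ y ∈ Finset.univ.filter (fun y => ¬ g y ≠ h y), g y * b^(pos y)
      = ∑ y ∈ Finset.univ.filter (fun y => ¬ g y ≠ h y), h y * b^(pos y) := by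
    refine Finset.sum_congr rfl fun y hy => ?_
    have := (Finset.mem_filter.mp hy).2
    have : g y = h y := by omega
    rw [this]
  have hDeq : ∑ y ∈ D, g y * b^(pos y) = ∑ y ∈ D, h y * b^(pos y) := by rw [hD]; omega
  -- bound the g-side
  have hgD : ∑ y ∈ D, g y * b^(pos y)
      = g x * b^(pos x) + ∑ y ∈ D.erase x, g y * b^(pos y) :=
    (Finset.add_sum_erase D _ hxD).symm
  have herase : ∑ y ∈ D.erase x, g y * b^(pos y) < b^(pos x) := by
    refine sum_lt_pow _ pos (Set.injOn_of_injective hpos) (pos x) ?_ g b hb (fun y _ => hg y)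
    intro y hy
    have hyD := Finset.mem_of_mem_erase hy
    have hyne := Finset.ne_of_mem_erase hy
    have h1 : pos y ≤ pos x := hmax y (Finset.mem_filter.mp hyD).2
    have h2 : pos y ≠ pos x := fun hc => hyne (hpos hc)
    omega
  have hhD : h x * b^(pos x) ≤ ∑ y ∈ D, h y * b^(pos y) :=
    Finset.single_le_sum (f := fun y => h y * b^(pos y)) (fun y _ => Nat.zero_le _) hxD
  have hfin : g x * b^(pos x) + b^(pos x) ≤ h x * b^(pos x) := by
    have : (g x + 1) * b^(pos x) ≤ h x * b^(pos x) :=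
      Nat.mul_le_mul_right _ (by omega)
    have hexp : (g x + 1) * b^(pos x) = g x * b^(pos x) + b^(pos x) := by ring
    omega
  omega

lemma digit_inj {ι : Type*} [Fintype ι] [DecidableEq ι] {b : ℕ} (hb : 1 ≤ b)
    (pos : ι → ℕ) (hpos : Function.Injective pos) (g h : ι → ℕ)
    (hg : ∀ x, g x < b) (hh : ∀ x, h x < b)
    (heq : ∑ x, g x * b^(pos x) = ∑ x, h x * b^(pos x)) : g = h := by
  classical
  by_contra hne
  have hDne : (Finset.univ.filter (fun y => g y ≠ h y)).Nonempty := by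
    rw [Finset.filter_nonempty_iff]
    by_contra hc
    push_neg at hc
    exact hne (funext fun y => by
      have := hc y (Finset.mem_univ y)
      omega)
  obtain ⟨x, hxD, hxmax⟩ := Finset.exists_max_image _ pos hDne
  have hxne := (Finset.mem_filter.mp hxD).2
  have hmax' : ∀ y, g y ≠ h y → pos y ≤ pos x := fun y hy =>
    hxmax y (Finset.mem_filter.mpr ⟨Finset.mem_univ y, hy⟩)
  rcases Nat.lt_or_ge (g x) (h x) with hlt | hge
  · exact digit_core hb pos hpos g h hg heq x hlt hmax'
  · have hlt : h x < g x := by omega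
    exact digit_core hb pos hpos h g hh heq.symm x hlt (fun y hy => hmax' y (Ne.symm hy))

end Digits


section Main
variable {X : Type*} (M : FinMatroid X) {k : ℕ} {d : Fin k → ℕ}
  (φ : ∀ i : Fin k, Fin (d i) → X → X)

/-- The set of `φ`-translates of `a` with equal norm and strictly smaller weight. -/
def DsetP (c : ∀ i : Fin k, Fin (d i) → ℕ) (a : X) (p : ∀ i : Fin k, Fin (d i) → ℕ) : Set X :=
  {z | ∃ q, nrmE q = nrmE p ∧ Lw c q < Lw c p ∧ z = opPow φ q a}

/-- The main invariant. -/
def PinvP (c : ∀ i : Fin k, Fin (d i) → ℕ) (a : X) (B : Set X)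
    (p : ∀ i : Fin k, Fin (d i) → ℕ) : Prop :=
  opPow φ p a ∈ M.cl (PhiEq φ (nrmE p) B ∪ DsetP φ c a p)

lemma mem_PhiEq_incr (hcomm : Commuting φ) {s : Fin k → ℕ} {B : Set X} {x : X}
    (hx : x ∈ PhiEq φ s B) (i : Fin k) (j' : Fin (d i)) :
    φ i j' x ∈ PhiEq φ (Function.update s i (s i + 1)) B := by
  obtain ⟨r, hr, b, hb, rfl⟩ := hx
  refine ⟨incr r i j', ?_, b, hb, (opPow_incr φ hcomm r i j' b).symm⟩
  have hnr : nrmE r = s := funext hr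
  have h1 : nrmE (incr r i j') = Function.update s i (s i + 1) := by
    rw [nrmE_incr, hnr]
  exact fun i' => congrFun h1 i'

lemma step_lemma (hcomm : Commuting φ) (htri : ∀ i, Triangular M (φ i))
    (c : ∀ i : Fin k, Fin (d i) → ℕ) (hc : ∀ (i : Fin k) (j j' : Fin (d i)), j' ≤ j → c i j' ≤ c i j)
    (a : X) (B : Set X) (p : ∀ i : Fin k, Fin (d i) → ℕ) (i : Fin k) (j : Fin (d i))
    (h : PinvP M φ c a B p) : PinvP M φ c a B (incr p i j) := by
  unfold PinvP at h ⊢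
  have h2 := htri i j (opPow φ p a) _ h
  have heq : opPow φ (incr p i j) a = φ i j (opPow φ p a) := opPow_incr φ hcomm p i j a
  rw [heq]
  refine M.cl_mono ?_ h2
  intro z hz
  simp only [Set.mem_iUnion] at hz
  obtain ⟨j', hj', x, hx, rfl⟩ := hz
  have hj'le : j' ≤ j := Finset.mem_Iic.mp hj'
  have hnrmp : nrmE (incr p i j) = Function.update (nrmE p) i (nrmE p i + 1) := nrmE_incr p i j
  rcases hx with hx | hx
  · left
    have := mem_PhiEq_incr φ hcomm hx i j'
    rwa [← hnrmp] at this
  · right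
    obtain ⟨q, hqn, hqL, rfl⟩ := hx
    refine ⟨incr q i j', ?_, ?_, (opPow_incr φ hcomm q i j' a).symm⟩
    · rw [nrmE_incr, hqn, hnrmp]
    · rw [Lw_incr, Lw_incr]
      have := hc i j j' hj'le
      omega

/-- pointwise sum of exponents -/
def addE {k : ℕ} {d : Fin k → ℕ} (r t : ∀ i : Fin k, Fin (d i) → ℕ) : ∀ i : Fin k, Fin (d i) → ℕ :=
  fun i j => r i j + t i j

lemma reach_lemma (hcomm : Commuting φ) (htri : ∀ i, Triangular M (φ i))
    (c : ∀ i : Fin k, Fin (d i) → ℕ) (hc : ∀ (i : Fin k) (j j' : Fin (d i)), j' ≤ j → c i j' ≤ c i j)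
    (a : X) (B : Set X) (r₀ : ∀ i : Fin k, Fin (d i) → ℕ) (h0 : PinvP M φ c a B r₀) :
    ∀ (n : ℕ) (t : ∀ i : Fin k, Fin (d i) → ℕ), (∑ i, ∑ j, t i j) = n →
      PinvP M φ c a B (addE r₀ t) := by
  intro n
  induction n with
  | zero =>
    intro t ht
    have hall : ∀ i j, t i j = 0 := by
      intro i j
      have h1 := Finset.sum_eq_zero_iff.mp ht i (Finset.mem_univ i)
      exact Finset.sum_eq_zero_iff.mp h1 j (Finset.mem_univ j)
    have : addE r₀ t = r₀ := by
      funext i j; simp [addE, hall i j]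
    rwa [this]
  | succ n ih =>
    intro t ht
    have hpos : ∃ i, ∑ j, t i j ≠ 0 := by
      by_contra hcon
      push_neg at hcon
      rw [Finset.sum_congr rfl (fun i _ => hcon i)] at ht
      simp at ht
    obtain ⟨i, hi⟩ := hpos
    have hposj : ∃ j, t i j ≠ 0 := by
      by_contra hcon
      push_neg at hcon
      exact hi (Finset.sum_eq_zero (fun j _ => hcon j))
    obtain ⟨j, hj⟩ := hposj
    set t' : ∀ i : Fin k, Fin (d i) → ℕ :=
      Function.update t i (Function.update (t i) j (t i j - 1)) with ht'
    have htt' : t = incr t' i j := by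
      funext i' j'
      by_cases hii : i' = i
      · subst hii
        show t i' j' = Function.update t' i' (Function.update (t' i') j (t' i' j + 1)) i' j'
        rw [Function.update_self]
        by_cases hjj : j' = j
        · subst hjj
          rw [Function.update_self]
          have : t' i' j' = t i' j' - 1 := by
            rw [ht']
            rw [Function.update_self, Function.update_self]
          omega
        · rw [Function.update_of_ne hjj]
          rw [ht', Function.update_self, Function.update_of_ne hjj]
      · show t i' j' = Function.update t' i (Function.update (t' i) j (t' i j + 1)) i' j'
        rw [Function.update_of_ne hii, ht', Function.update_of_ne hii]
    have hsum' : (∑ i', ∑ j', t' i' j') = n := by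
      have h1 : Lw (fun _ _ => 1) t = (∑ i', ∑ j', t i' j') := by
        unfold Lw; simp
      have h2 : Lw (fun _ _ => 1) t' = (∑ i', ∑ j', t' i' j') := by
        unfold Lw; simp
      have h3 : Lw (fun _ _ => 1) (incr t' i j) = Lw (fun _ _ => 1) t' + 1 :=
        Lw_incr _ t' i j
      rw [htt', h3] at h1
      rw [htt'] at ht
      omega
    have haddE : addE r₀ t = incr (addE r₀ t') i j := by
      funext i' j'
      rw [htt']
      show r₀ i' j' + incr t' i j i' j' = incr (addE r₀ t') i j i' j'
      unfold incr
      by_cases hii : i' = i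
      · subst hii
        rw [Function.update_self, Function.update_self]
        by_cases hjj : j' = j
        · subst hjj
          rw [Function.update_self, Function.update_self]
          rfl
        · rw [Function.update_of_ne hjj, Function.update_of_ne hjj]
          rfl
      · rw [Function.update_of_ne hii, Function.update_of_ne hii]
        rfl
    rw [haddE]
    exact step_lemma M φ hcomm htri c hc a B _ i j (ih t' hsum')

/-- The spanning lemma. -/
lemma span_lemma (hcomm : Commuting φ) (htri : ∀ i, Triangular M (φ i))
    (c : ∀ i : Fin k, Fin (d i) → ℕ) (hc : ∀ (i : Fin k) (j j' : Fin (d i)), j' ≤ j → c i j' ≤ c i j)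
    (a : X) (B : Set X) (r₀ : ∀ i : Fin k, Fin (d i) → ℕ) (h0 : PinvP M φ c a B r₀)
    (s : Fin k → ℕ) (hs : ∀ i, nrmE r₀ i ≤ s i) :
    ∀ (n : ℕ) (q : ∀ i : Fin k, Fin (d i) → ℕ), (∀ i, ∑ j, q i j = s i) → Lw c q ≤ n →
      opPow φ q a ∈ M.cl (PhiEq φ s B ∪
        {z | ∃ q', (∀ i, ∑ j, q' i j = s i) ∧ (¬ ∀ i j, r₀ i j ≤ q' i j) ∧ z = opPow φ q' a}) := by
  intro n
  induction n using Nat.strong_induction_on with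
  | _ n ihn =>
    intro q hq hLq
    by_cases hsp : ∀ i j, r₀ i j ≤ q i j
    · -- q is "special": q = r₀ + t
      have hq' : q = addE r₀ (fun i j => q i j - r₀ i j) := by
        funext i j
        have := hsp i j
        show q i j = r₀ i j + (q i j - r₀ i j)
        omega
      have hP : PinvP M φ c a B q := by
        rw [hq']
        exact reach_lemma M φ hcomm htri c hc a B r₀ h0 _ _ rfl
      unfold PinvP at hP
      have hnq : nrmE q = s := funext hq
      rw [hnq] at hP
      refine M.cl_subset_cl ?_ hP
      intro z hz
      rcases hz with hz | hz
      · exact M.subset_cl _ (Or.inl hz)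
      · obtain ⟨q', hq'n, hq'L, rfl⟩ := hz
        have hq's : ∀ i, ∑ j, q' i j = s i := fun i => by
          have := congrFun hq'n i
          rw [hnq] at this
          exact this
        have hLlt : Lw c q' < n := by
          have := hLq
          omega
        exact ihn (Lw c q') hLlt q' hq's (le_refl _)
    · exact M.subset_cl _ (Or.inr ⟨q, hq, hsp, rfl⟩)

end Main


section Endgame
variable {X : Type*} (M : FinMatroid X) {k : ℕ} {d : Fin k → ℕ}
  (φ : ∀ i : Fin k, Fin (d i) → X → X)

/-- The slice set of exponents. -/
def sliceSet {k : ℕ} (d : Fin k → ℕ) (s : Fin k → ℕ) : Set (∀ i : Fin k, Fin (d i) → ℕ) :=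
  {r | ∀ i, ∑ j, r i j = s i}

lemma sliceSet_finite (s : Fin k → ℕ) : (sliceSet d s).Finite := by
  have : Finite ↥(sliceSet d s) := finite_bigtype s
  exact Set.toFinite _

lemma ncard_sliceSet (s : Fin k → ℕ) : (sliceSet d s).ncard = cntEq d s := by
  rw [← Nat.card_coe_set_eq]
  rfl

lemma PhiEq_singleton_eq_image (s : Fin k → ℕ) (a : X) :
    PhiEq φ s {a} = (fun r => opPow φ r a) '' sliceSet d s := by
  ext x
  constructor
  · rintro ⟨r, hr, b, hb, rfl⟩
    rcases hb with rfl
    exact ⟨r, hr, rfl⟩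
  · rintro ⟨r, hr, rfl⟩
    exact ⟨r, hr, a, rfl, rfl⟩

lemma PhiEq_singleton_finite (s : Fin k → ℕ) (a : X) : (PhiEq φ s {a}).Finite := by
  rw [PhiEq_singleton_eq_image]
  exact (sliceSet_finite s).image _

lemma PhiEq_singleton_ncard (s : Fin k → ℕ) (a : X) :
    (PhiEq φ s {a}).ncard ≤ cntEq d s := by
  rw [PhiEq_singleton_eq_image, ← ncard_sliceSet (d := d) s]
  exact Set.ncard_image_le (sliceSet_finite s)

/-- rank is attained by a finite minimal basis, for finite `V`. -/
lemma rk_attained (W V : Set X) (hV : V.Finite) :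
    ∃ B₀, M.IsBasisOver W V B₀ ∧ B₀.Finite ∧ B₀.ncard = M.rk V W := by
  obtain ⟨B₁, hB₁, hB₁fin⟩ := M.exists_basis W V.ncard V hV (le_refl _)
  have hne : {n : ℕ | ∃ B₀ : Set X, M.IsBasisOver W V B₀ ∧ B₀.ncard = n}.Nonempty :=
    ⟨B₁.ncard, B₁, hB₁, rfl⟩
  have hmem := Nat.sInf_mem hne
  obtain ⟨B₀, hB₀, hcard⟩ := hmem
  exact ⟨B₀, hB₀, hV.subset hB₀.1, hcard⟩

lemma rk_le_of_basis {W V B₀ : Set X} (h : M.IsBasisOver W V B₀) : M.rk V W ≤ B₀.ncard :=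
  Nat.sInf_le ⟨B₀, h, rfl⟩

lemma rk_le_cntEq (s : Fin k → ℕ) (a : X) (W : Set X) :
    M.rk (PhiEq φ s {a}) W ≤ cntEq d s := by
  obtain ⟨B₀, hB₀, hfin, hcard⟩ := rk_attained M W (PhiEq φ s {a}) (PhiEq_singleton_finite φ s a)
  rw [← hcard]
  calc B₀.ncard ≤ (PhiEq φ s {a}).ncard :=
        Set.ncard_le_ncard hB₀.1 (PhiEq_singleton_finite φ s a)
    _ ≤ cntEq d s := PhiEq_singleton_ncard φ s a

/-- position function injectivity -/
lemma posidx_inj (Dm : ℕ) (hDm : ∀ i, d i ≤ Dm) :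
    Function.Injective (fun x : (Σ i : Fin k, Fin (d i)) => (x.1 : ℕ) * Dm + (x.2 : ℕ)) := by
  have key : ∀ (x y : Σ i : Fin k, Fin (d i)),
      (x.1 : ℕ) * Dm + (x.2 : ℕ) = (y.1 : ℕ) * Dm + (y.2 : ℕ) → (x.1 : ℕ) ≤ (y.1 : ℕ) → x = y := by
    rintro ⟨i, j⟩ ⟨i', j'⟩ h hle
    have h' : (i : ℕ) * Dm + (j : ℕ) = (i' : ℕ) * Dm + (j' : ℕ) := h
    have hle' : (i : ℕ) ≤ (i' : ℕ) := hle
    have hj : (j : ℕ) < Dm := lt_of_lt_of_le j.isLt (hDm i)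
    have hj' : (j' : ℕ) < Dm := lt_of_lt_of_le j'.isLt (hDm i')
    have hii : (i : ℕ) = (i' : ℕ) := by
      by_contra hne
      have hlt : (i : ℕ) + 1 ≤ (i' : ℕ) := by omega
      have : ((i : ℕ) + 1) * Dm ≤ (i' : ℕ) * Dm := Nat.mul_le_mul_right _ hlt
      nlinarith
    have hi : i = i' := Fin.ext hii
    subst hi
    have : (j : ℕ) = (j' : ℕ) := by omega
    have : j = j' := Fin.ext this
    subst this
    rfl
  intro x y h
  rcases Nat.le_total (x.1 : ℕ) (y.1 : ℕ) with hle | hle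
  · exact key x y h hle
  · exact (key y x h.symm hle).symm

/-- `Lw` with base-`b` coefficients is injective on a slice. -/
lemma Lw_inj_on_slice (s₀ : Fin k → ℕ) (U : ℕ) (hU : ∀ i, s₀ i ≤ U) (Dm : ℕ)
    (hDm : ∀ i, d i ≤ Dm)
    (q q' : ∀ i : Fin k, Fin (d i) → ℕ)
    (hq : ∀ i, ∑ j, q i j = s₀ i) (hq' : ∀ i, ∑ j, q' i j = s₀ i)
    (hL : Lw (fun i j => (U+1) ^ ((i : ℕ) * Dm + (j : ℕ))) q
        = Lw (fun i j => (U+1) ^ ((i : ℕ) * Dm + (j : ℕ))) q') : q = q' := by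
  classical
  set pos : (Σ i : Fin k, Fin (d i)) → ℕ := fun x => (x.1 : ℕ) * Dm + (x.2 : ℕ) with hpos
  have hsig : ∀ r : ∀ i : Fin k, Fin (d i) → ℕ,
      Lw (fun i j => (U+1) ^ ((i : ℕ) * Dm + (j : ℕ))) r
        = ∑ x : Σ i : Fin k, Fin (d i), r x.1 x.2 * (U+1) ^ (pos x) := by
    intro r
    unfold Lw
    rw [← Finset.univ_sigma_univ, Finset.sum_sigma]
  have hdig : ∀ (r : ∀ i : Fin k, Fin (d i) → ℕ), (∀ i, ∑ j, r i j = s₀ i) →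
      ∀ x : Σ i : Fin k, Fin (d i), r x.1 x.2 < U + 1 := by
    rintro r hr ⟨i, j⟩
    show r i j < U + 1
    have h1 : r i j ≤ ∑ j', r i j' :=
      Finset.single_le_sum (f := fun j' => r i j') (fun j' _ => Nat.zero_le _) (Finset.mem_univ j)
    have := hU i
    have := hr i
    omega
  have := digit_inj (ι := Σ i : Fin k, Fin (d i)) (b := U + 1) (by omega) pos
    (posidx_inj Dm hDm) (fun x => q x.1 x.2) (fun x => q' x.1 x.2)
    (hdig q hq) (hdig q' hq') (by rw [← hsig, ← hsig]; exact hL)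
  funext i j
  exact congrFun this ⟨i, j⟩

/-- Extraction of a base relation from a rank defect. -/
lemma extract_base (hcomm : Commuting φ) (a : X) (B : Set X)
    (c : ∀ i : Fin k, Fin (d i) → ℕ) (s₀ : Fin k → ℕ)
    (hinj : ∀ q q' : ∀ i : Fin k, Fin (d i) → ℕ,
        (∀ i, ∑ j, q i j = s₀ i) → (∀ i, ∑ j, q' i j = s₀ i) → Lw c q = Lw c q' → q = q')
    (hlt : M.rk (PhiEq φ s₀ {a}) (PhiEq φ s₀ B) < cntEq d s₀) :
    ∃ r₀, (∀ i, ∑ j, r₀ i j = s₀ i) ∧ PinvP M φ c a B r₀ := by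
  classical
  by_contra hno
  push_neg at hno
  set W : Set X := PhiEq φ s₀ B with hW
  set R : Finset (∀ i : Fin k, Fin (d i) → ℕ) := (sliceSet_finite (d := d) s₀).toFinset with hR
  have hmemR : ∀ r, r ∈ R ↔ (∀ i, ∑ j, r i j = s₀ i) := by
    intro r
    rw [hR, Set.Finite.mem_toFinset]
    rfl
  obtain ⟨B₀, hB₀, hB₀fin, hB₀card⟩ :=
    rk_attained M W (PhiEq φ s₀ {a}) (PhiEq_singleton_finite φ s₀ a)
  have hcard := M.card_le_ncard_basis W (fun q => opPow φ q a) (Lw c) R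
    (fun q hq q' hq' hL => hinj q q' ((hmemR q).mp hq) ((hmemR q').mp hq') hL)
    (by
      intro r hr
      intro hbad
      apply hno r ((hmemR r).mp hr)
      unfold PinvP
      have hnrm : nrmE r = s₀ := funext ((hmemR r).mp hr)
      rw [hnrm]
      refine M.cl_mono ?_ hbad
      apply Set.union_subset_union_right
      rintro z ⟨q, hq, hqL, rfl⟩
      exact ⟨q, funext ((hmemR q).mp hq) |>.trans hnrm.symm, hqL, rfl⟩)
    B₀ hB₀fin
    (by
      intro r hr
      exact hB₀.2.2 ⟨r, (hmemR r).mp hr, a, rfl, rfl⟩)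
  have hRcard : R.card = cntEq d s₀ := by
    rw [hR, ← Set.ncard_eq_toFinset_card (sliceSet d s₀) (sliceSet_finite s₀)]
    exact ncard_sliceSet s₀
  omega

/-- The rank defect propagates: quantitative spanning bound. -/
lemma rank_bound (hcomm : Commuting φ) (htri : ∀ i, Triangular M (φ i)) (a : X) (B : Set X)
    (c : ∀ i : Fin k, Fin (d i) → ℕ) (hc : ∀ (i : Fin k) (j j' : Fin (d i)), j' ≤ j → c i j' ≤ c i j)
    (s₀ : Fin k → ℕ) (r₀ : ∀ i : Fin k, Fin (d i) → ℕ) (hr₀s : ∀ i, ∑ j, r₀ i j = s₀ i)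
    (h0 : PinvP M φ c a B r₀) (s' : Fin k → ℕ) :
    M.rk (PhiEq φ (fun i => s' i + s₀ i) {a}) (PhiEq φ (fun i => s' i + s₀ i) B) + cntEq d s'
      ≤ cntEq d (fun i => s' i + s₀ i) := by
  classical
  set s : Fin k → ℕ := fun i => s' i + s₀ i with hs
  set W : Set X := PhiEq φ s B with hW
  set Q1 : Set (∀ i : Fin k, Fin (d i) → ℕ) :=
    {q | (∀ i, ∑ j, q i j = s i) ∧ ¬ ∀ i j, r₀ i j ≤ q i j} with hQ1
  set Q2 : Set (∀ i : Fin k, Fin (d i) → ℕ) :=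
    {q | (∀ i, ∑ j, q i j = s i) ∧ ∀ i j, r₀ i j ≤ q i j} with hQ2
  set SS : Set X := {z | ∃ q', (∀ i, ∑ j, q' i j = s i) ∧ (¬ ∀ i j, r₀ i j ≤ q' i j)
    ∧ z = opPow φ q' a} with hSS
  have hQ1sub : Q1 ⊆ sliceSet d s := fun q hq => hq.1
  have hQ2sub : Q2 ⊆ sliceSet d s := fun q hq => hq.1
  have hQ1fin : Q1.Finite := (sliceSet_finite s).subset hQ1sub
  have hQ2fin : Q2.Finite := (sliceSet_finite s).subset hQ2sub
  have hSSim : SS = (fun q => opPow φ q a) '' Q1 := by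
    ext z
    constructor
    · rintro ⟨q, h1, h2, rfl⟩; exact ⟨q, ⟨h1, h2⟩, rfl⟩
    · rintro ⟨q, ⟨h1, h2⟩, rfl⟩; exact ⟨q, h1, h2, rfl⟩
  have hSSfin : SS.Finite := by rw [hSSim]; exact hQ1fin.image _
  have hSScard : SS.ncard ≤ Q1.ncard := by rw [hSSim]; exact Set.ncard_image_le hQ1fin
  -- a basis of SS over W spans the whole slice
  obtain ⟨B₁, hB₁, hB₁fin⟩ := M.exists_basis W SS.ncard SS hSSfin (le_refl _)
  have hbasis : M.IsBasisOver W (PhiEq φ s {a}) B₁ := by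
    refine ⟨?_, hB₁.2.1, ?_⟩
    · refine hB₁.1.trans ?_
      rintro z ⟨q, h1, _h2, rfl⟩
      exact ⟨q, h1, a, rfl, rfl⟩
    · rintro z ⟨q, hq, b, hb, rfl⟩
      rcases hb with rfl
      have hspan := span_lemma M φ hcomm htri c hc b B r₀ h0 s
        (fun i => by have := hr₀s i; show nrmE r₀ i ≤ s i; unfold nrmE; simp only [hs]; omega)
        (Lw c q) q hq (le_refl _)
      refine M.cl_subset_cl ?_ hspan
      intro w hw
      rcases hw with hw | hw
      · exact M.subset_cl _ (Or.inl hw)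
      · exact hB₁.2.2 hw
  have hrk : M.rk (PhiEq φ s {a}) W ≤ Q1.ncard := by
    calc M.rk (PhiEq φ s {a}) W ≤ B₁.ncard := rk_le_of_basis M hbasis
      _ ≤ SS.ncard := Set.ncard_le_ncard hB₁.1 hSSfin
      _ ≤ Q1.ncard := hSScard
  -- count : Q1 + Q2 = full slice, and Q2 ≃ slice s'
  have hdisj : Disjoint Q1 Q2 := by
    rw [Set.disjoint_iff]
    rintro q ⟨⟨_, h1⟩, ⟨_, h2⟩⟩
    exact absurd h2 h1
  have hunion : Q1 ∪ Q2 = sliceSet d s := by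
    ext q
    constructor
    · rintro (hq | hq)
      · exact hq.1
      · exact hq.1
    · intro hq
      by_cases hsp : ∀ i j, r₀ i j ≤ q i j
      · exact Or.inr ⟨hq, hsp⟩
      · exact Or.inl ⟨hq, hsp⟩
  have hcount : Q1.ncard + Q2.ncard = cntEq d s := by
    rw [← ncard_sliceSet (d := d) s, ← hunion]
    exact (Set.ncard_union_eq hdisj hQ1fin hQ2fin).symm
  have hQ2card : Q2.ncard = cntEq d s' := by
    rw [← Nat.card_coe_set_eq]
    unfold cntEq
    refine Nat.card_congr ?_
    refine ⟨fun q => ⟨fun i j => (q : ∀ i : Fin k, Fin (d i) → ℕ) i j - r₀ i j, ?_⟩,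
      fun t => ⟨addE r₀ (t : ∀ i : Fin k, Fin (d i) → ℕ), ?_⟩, ?_, ?_⟩
    · intro i
      obtain ⟨q, hq1, hq2⟩ := q
      show (∑ j, (q i j - r₀ i j)) = s' i
      have hsum : (∑ j, (q i j - r₀ i j)) + (∑ j, r₀ i j) = ∑ j, q i j := by
        rw [← Finset.sum_add_distrib]
        exact Finset.sum_congr rfl (fun j _ => by have := hq2 i j; omega)
      have h1 := hq1 i
      have h2 := hr₀s i
      simp only [hs] at h1
      omega
    · constructor
      · intro i
        have h1 : (∑ j, (r₀ i j + (t : ∀ i : Fin k, Fin (d i) → ℕ) i j)) = s₀ i + s' i := by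
          rw [Finset.sum_add_distrib, hr₀s i, t.2 i]
        show (∑ j, addE r₀ (t : ∀ i : Fin k, Fin (d i) → ℕ) i j) = s i
        unfold addE
        simp only [hs]
        omega
      · intro i j
        show r₀ i j ≤ r₀ i j + _
        omega
    · rintro ⟨q, hq1, hq2⟩
      ext i j
      show r₀ i j + (q i j - r₀ i j) = q i j
      have := hq2 i j
      omega
    · rintro ⟨t, ht⟩
      ext i j
      show r₀ i j + t i j - r₀ i j = t i j
      omega
  omega

end Endgame


lemma final_real (rk cs cs' V N U D' : ℕ) (ε : ℝ) (hε : 0 < ε)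
    (hcs : 0 < cs) (h1 : rk + cs' ≤ cs) (h2 : cs * V^D' ≤ cs' * (N+1)^D')
    (hUV : V + U = N + 1) (hN1 : (D' : ℝ) * U < ε * ((N:ℝ)+1)) :
    |((rk : ℝ))/(cs : ℝ) - 0| < ε := by
  have hA : (0:ℝ) < (cs : ℝ) := by exact_mod_cast hcs
  have hr0 : (0:ℝ) ≤ (rk : ℝ) := by positivity
  have hNP : (0:ℝ) < ((N:ℝ)+1) := by positivity
  have hP1 : (0:ℝ) < ((N:ℝ)+1)^D' := by positivity
  have h1' : (rk : ℝ) + (cs' : ℝ) ≤ (cs : ℝ) := by exact_mod_cast h1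
  have h2' : (cs : ℝ) * (V:ℝ)^D' ≤ (cs' : ℝ) * ((N:ℝ)+1)^D' := by exact_mod_cast h2
  have hVcast : (V : ℝ) = ((N:ℝ)+1) - (U:ℝ) := by
    have h := hUV
    have : ((V + U : ℕ) : ℝ) = ((N + 1 : ℕ) : ℝ) := by exact_mod_cast congrArg (Nat.cast (R := ℝ)) h
    push_cast at this
    linarith
  have hBern : (1 : ℝ) - (D' : ℝ) * ((U:ℝ)/((N:ℝ)+1)) ≤ ((V:ℝ)/((N:ℝ)+1))^D' := by
    have hle : (U:ℝ) ≤ (N:ℝ)+1 := by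
      have : U ≤ N + 1 := by omega
      exact_mod_cast this
    have ha : (-2 : ℝ) ≤ -((U:ℝ)/((N:ℝ)+1)) := by
      have : (U:ℝ)/((N:ℝ)+1) ≤ 1 := by rw [div_le_one hNP]; exact hle
      linarith
    have hb := one_add_mul_le_pow ha D'
    have heq : (1 + -((U:ℝ)/((N:ℝ)+1))) = (V:ℝ)/((N:ℝ)+1) := by
      rw [hVcast]; field_simp; ring
    rw [heq] at hb
    linarith
  have hdiv : ((V:ℝ)/((N:ℝ)+1))^D' ≤ (cs':ℝ)/(cs:ℝ) := by
    rw [div_pow, div_le_div_iff₀ hP1 hA]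
    calc (V:ℝ)^D' * (cs:ℝ) = (cs:ℝ) * (V:ℝ)^D' := by ring
      _ ≤ (cs':ℝ) * ((N:ℝ)+1)^D' := h2'
  have hrA : (rk:ℝ) / (cs:ℝ) ≤ (D' : ℝ) * ((U:ℝ)/((N:ℝ)+1)) := by
    have h3 : (1:ℝ) - (D' : ℝ) * ((U:ℝ)/((N:ℝ)+1)) ≤ (cs':ℝ)/(cs:ℝ) := le_trans hBern hdiv
    have h4 : (rk:ℝ) / (cs:ℝ) ≤ 1 - (cs':ℝ)/(cs:ℝ) := by
      rw [div_le_iff₀ hA]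
      have : (1 - (cs':ℝ)/(cs:ℝ)) * (cs:ℝ) = (cs:ℝ) - (cs':ℝ) := by field_simp
      rw [this]
      linarith
    linarith
  have hfin : (D' : ℝ) * ((U:ℝ)/((N:ℝ)+1)) < ε := by
    have heq2 : (D' : ℝ) * ((U:ℝ)/((N:ℝ)+1)) = ((D':ℝ) * (U:ℝ))/((N:ℝ)+1) := by ring
    rw [heq2, div_lt_iff₀ hNP]
    linarith
  have habs : |(rk:ℝ) / (cs:ℝ) - 0| = (rk:ℝ) / (cs:ℝ) := by
    rw [sub_zero]
    exact abs_of_nonneg (div_nonneg hr0 (le_of_lt hA))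
  rw [habs]
  linarith


/-- **Lemma 3.1.** If each `Φᵢ` is triangular, then for `a ∈ X` and `B ⊆ X` the limit
`lim_{min(s̄)→∞} rk(Φ^{(s̄)}({a}) | Φ^{(s̄)}(B)) / |Φ^{(s̄)}|` equals `0` if
`a ∈ cl^Φ(B)` and equals `1` if `a ∉ cl^Φ(B)`. -/
theorem statement9 {X : Type*} (M : FinMatroid X) {k : ℕ} (hk : 0 < k) {d : Fin k → ℕ}
    (hd : ∀ i, 0 < d i) (φ : ∀ i : Fin k, Fin (d i) → X → X) (hcomm : Commuting φ)
    (htri : ∀ i, Triangular M (φ i)) (a : X) (B : Set X) :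
    (a ∈ clPhi M φ B →
      ∀ ε : ℝ, 0 < ε → ∃ N : ℕ, ∀ s : Fin k → ℕ, (∀ i, N ≤ s i) →
        |((M.rk (PhiEq φ s {a}) (PhiEq φ s B) : ℝ) / (cntEq d s : ℝ)) - 0| < ε) ∧
    (a ∉ clPhi M φ B →
      ∀ ε : ℝ, 0 < ε → ∃ N : ℕ, ∀ s : Fin k → ℕ, (∀ i, N ≤ s i) →
        |((M.rk (PhiEq φ s {a}) (PhiEq φ s B) : ℝ) / (cntEq d s : ℝ)) - 1| < ε) := by
  classical
  constructor
  · -- a ∈ clPhi : limit is 0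
    intro hmem ε hε
    obtain ⟨s₀, hs₀⟩ := hmem
    set U : ℕ := Finset.univ.sup s₀ with hUdef
    set Dm : ℕ := Finset.univ.sup d + 1 with hDmdef
    set c : ∀ i : Fin k, Fin (d i) → ℕ := fun i j => (U+1) ^ ((i : ℕ) * Dm + (j : ℕ)) with hcdef
    have hc : ∀ (i : Fin k) (j j' : Fin (d i)), j' ≤ j → c i j' ≤ c i j := by
      intro i j j' hle
      exact Nat.pow_le_pow_right (by omega) (by omega)
    have hDm : ∀ i, d i ≤ Dm := fun i =>
      (Finset.le_sup (Finset.mem_univ i)).trans (by omega)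
    have hUb : ∀ i, s₀ i ≤ U := fun i => Finset.le_sup (Finset.mem_univ i)
    obtain ⟨r₀, hr₀s, hP⟩ := extract_base M φ hcomm a B c s₀
      (fun q q' hq hq' hL => Lw_inj_on_slice s₀ U hUb Dm hDm q q' hq hq' hL) hs₀
    set D' : ℕ := ∑ i, (d i - 1) with hD'def
    obtain ⟨N1, hN1⟩ := exists_nat_gt ((D' : ℝ) * U / ε)
    set N : ℕ := N1 + U with hNdef
    have hUN : U ≤ N := by omega
    refine ⟨N, fun s hsN => ?_⟩
    set s' : Fin k → ℕ := fun i => s i - s₀ i with hs'def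
    have hss' : ∀ i, s i = s' i + s₀ i := by
      intro i
      have h1 := hUb i
      have h2 := hsN i
      simp only [hs'def]
      omega
    have hs_eq : s = fun i => s' i + s₀ i := funext hss'
    have hrb := rank_bound M φ hcomm htri a B c hc s₀ r₀ hr₀s hP s'
    rw [← hs_eq] at hrb
    set V : ℕ := N + 1 - U with hVdef
    have hUV : V + U = N + 1 := by omega
    have hratio := cnt_ratio hd s₀ s' N U V hUb hUV
      (fun i => by have := hss' i; have := hsN i; omega)
    rw [← hs_eq] at hratio
    have hcntpos : 0 < cntEq d s := cntEq_pos hd s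
    have hN1' : (↑D' * ↑U : ℝ) < ε * ((N:ℝ)+1) := by
      rw [div_lt_iff₀ hε] at hN1
      have hle : (N1 : ℝ) ≤ (N:ℝ) + 1 := by
        have : N1 ≤ N + 1 := by omega
        exact_mod_cast this
      calc (D':ℝ) * (U:ℝ) < (N1:ℝ) * ε := hN1
        _ ≤ ((N:ℝ)+1) * ε := mul_le_mul_of_nonneg_right hle (le_of_lt hε)
        _ = ε * ((N:ℝ)+1) := by ring
    exact final_real (M.rk (PhiEq φ s {a}) (PhiEq φ s B)) (cntEq d s) (cntEq d s')
      V N U D' ε hε hcntpos hrb hratio hUV hN1'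

  · -- a ∉ clPhi : limit is 1
    intro hmem ε hε
    refine ⟨0, fun s _ => ?_⟩
    have h1 : ¬ (M.rk (PhiEq φ s {a}) (PhiEq φ s B) < cntEq d s) := fun h => hmem ⟨s, h⟩
    have h2 : M.rk (PhiEq φ s {a}) (PhiEq φ s B) ≤ cntEq d s := rk_le_cntEq M φ s a _
    have heq : M.rk (PhiEq φ s {a}) (PhiEq φ s B) = cntEq d s := by omega
    have hcntpos : 0 < cntEq d s := cntEq_pos hd s
    rw [heq, div_self (by exact_mod_cast hcntpos.ne' : (cntEq d s : ℝ) ≠ 0), sub_self, abs_zero]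
    exact hε
end

section
/- For all a ∈ X and B ⊆ X: a ∈ cl^{Φ*}(B) if and only if the family (φ^r̄(a))_{r̄ ∈ ℕ^m} is not cl-independent over Θ(B); that is, if and only if there exists r̄ ∈ ℕ^m with φ^r̄(a) ∈ cl(Θ(B) ∪ {φ^ū(a) : ū ∈ ℕ^m, ū ≠ r̄}). -/
open Set

namespace FinMatroid
variable {X : Type*} (M : FinMatroid X)

lemma indep_insert {A B₀ : Set X} {c : X}
    (hB : M.Indep A B₀) (hc : c ∉ M.cl (A ∪ B₀)) : M.Indep A (insert c B₀) := by
  intro b hb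
  rcases eq_or_ne b c with rfl | hbc
  · intro h
    apply hc
    refine M.cl_mono (union_subset_union_right A ?_) h
    intro x hx
    rcases hx with ⟨hx1, hx2⟩
    rcases hx1 with rfl | hx1
    · exact absurd rfl hx2
    · exact hx1
  · rcases hb with rfl | hb
    · exact absurd rfl hbc
    intro h
    have h1 : b ∈ M.cl ((A ∪ (B₀ \ {b})) ∪ {c}) := by
      refine M.cl_mono ?_ h
      intro x hx
      rcases hx with hx | ⟨hx1, hx2⟩
      · exact Or.inl (Or.inl hx)
      rcases hx1 with rfl | hx1
      · exact Or.inr rfl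
      · exact Or.inl (Or.inr ⟨hx1, hx2⟩)
    have h2 : b ∉ M.cl (A ∪ (B₀ \ {b})) := hB b hb
    have h3 := M.cl_exchange b c _ h1 h2
    apply hc
    refine M.cl_mono ?_ h3
    intro x hx
    rcases hx with (hx | ⟨hx1, _⟩) | hx
    · exact Or.inl hx
    · exact Or.inr hx1
    · rcases hx with rfl; exact Or.inr hb

lemma exists_basisOver (A C : Set X) (hC : C.Finite) :
    ∃ B₀, M.IsBasisOver A C B₀ := by
  have hT : {B₀ : Set X | B₀ ⊆ C ∧ M.Indep A B₀}.Finite :=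
    (hC.finite_subsets).subset (fun B hB => hB.1)
  obtain ⟨B₀, hB₀, hmax⟩ := hT.exists_maximalFor Set.ncard _
    ⟨∅, empty_subset C, fun b hb => absurd hb (notMem_empty b)⟩
  refine ⟨B₀, hB₀.1, hB₀.2, ?_⟩
  intro c hcC
  by_contra hc
  have hcB : c ∉ B₀ := fun h => hc (M.cl_mono (subset_union_right) (M.subset_cl _ h))
  have hfin : B₀.Finite := hC.subset hB₀.1
  have hmem : insert c B₀ ∈ {B₀ : Set X | B₀ ⊆ C ∧ M.Indep A B₀} :=
    ⟨insert_subset hcC hB₀.1, M.indep_insert hB₀.2 hc⟩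
  have hlt : B₀.ncard < (insert c B₀).ncard := by
    rw [Set.ncard_insert_of_notMem hcB hfin]; omega
  have := hmax hmem (le_of_lt hlt)
  omega

lemma rk_le_of_basis {A C B₀ : Set X} (h : M.IsBasisOver A C B₀) :
    M.rk C A ≤ B₀.ncard :=
  Nat.sInf_le ⟨B₀, h, rfl⟩

end FinMatroid

section Main

variable {X : Type*} {k : ℕ} {d : Fin k → ℕ}

lemma sfull_finite (s : Fin k → ℕ) :
    {u : ∀ i : Fin k, Fin (d i) → ℕ | ∀ i, ∑ j, u i j ≤ s i}.Finite := by
  rw [Set.finite_coe_iff.symm]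
  refine Finite.of_injective
    (fun u => (fun i (j : Fin (d i)) => (⟨u.1 i j, ?_⟩ : Fin (s i + 1)))) ?_
  · exact Nat.lt_succ_of_le (le_trans
      (Finset.single_le_sum (fun _ _ => Nat.zero_le _) (Finset.mem_univ j)) (u.2 i))
  · intro u v huv
    ext i j
    have := congrFun (congrFun huv i) j
    exact congrArg Fin.val this

lemma phile_singleton (φ : ∀ i : Fin k, Fin (d i) → X → X) (s : Fin k → ℕ) (a : X) :
    PhiLe φ s {a} = (fun u => opPow φ u a) ''
      {u : ∀ i : Fin k, Fin (d i) → ℕ | ∀ i, ∑ j, u i j ≤ s i} := by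
  ext x
  constructor
  · rintro ⟨u, hu, a', ha', rfl⟩
    rcases ha'
    exact ⟨u, hu, rfl⟩
  · rintro ⟨u, hu, rfl⟩
    exact ⟨u, hu, a, rfl, rfl⟩

lemma cntLe_eq (s : Fin k → ℕ) :
    cntLe d s = {u : ∀ i : Fin k, Fin (d i) → ℕ | ∀ i, ∑ j, u i j ≤ s i}.ncard := rfl

end Main

/-- **Proposition 3.3.** For `a ∈ X` and `B ⊆ X`: `a ∈ cl^{Φ*}(B)` if and only if the
family `(φ^r̄(a))_{r̄ ∈ ℕ^m}` is not `cl`-independent over `Θ(B)`, i.e. iff some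
`φ^r̄(a)` lies in the closure of `Θ(B)` together with the remaining `φ^ū(a)`. -/
theorem statement11 {X : Type*} (M : FinMatroid X) {k : ℕ} (hk : 0 < k) {d : Fin k → ℕ}
    (hd : ∀ i, 0 < d i) (φ : ∀ i : Fin k, Fin (d i) → X → X) (hcomm : Commuting φ)
    (a : X) (B : Set X) :
    a ∈ clPhiStar M φ B ↔
      ∃ r : ∀ i : Fin k, Fin (d i) → ℕ,
        opPow φ r a ∈ M.cl (Theta φ B ∪
          {x | ∃ u : ∀ i : Fin k, Fin (d i) → ℕ, u ≠ r ∧ x = opPow φ u a}) := by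
  constructor
  · rintro ⟨s, hrk⟩
    have hSf : {u : ∀ i : Fin k, Fin (d i) → ℕ | ∀ i, ∑ j, u i j ≤ s i}.Finite :=
      sfull_finite s
    have hCfin : (PhiLe φ s {a}).Finite := by
      rw [phile_singleton]; exact hSf.image _
    have hne : {n : ℕ | ∃ B₀, M.IsBasisOver (PhiLe φ s B) (PhiLe φ s {a}) B₀ ∧
        B₀.ncard = n}.Nonempty := by
      obtain ⟨B₀, hB₀⟩ := M.exists_basisOver (PhiLe φ s B) (PhiLe φ s {a}) hCfin
      exact ⟨_, B₀, hB₀, rfl⟩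
    obtain ⟨B₀, hB₀, hcard⟩ := Nat.sInf_mem hne
    have hlt : B₀.ncard < cntLe d s := by rw [hcard]; exact hrk
    have hB₀sub : B₀ ⊆ PhiLe φ s {a} := hB₀.1
    have hB₀fin : B₀.Finite := hCfin.subset hB₀sub
    have hrep : ∀ b : B₀, ∃ u,
        u ∈ {u : ∀ i : Fin k, Fin (d i) → ℕ | ∀ i, ∑ j, u i j ≤ s i} ∧
        (b : X) = opPow φ u a := by
      intro b
      have hb := hB₀sub b.2
      rw [phile_singleton] at hb
      rcases hb with ⟨u, hu, hb⟩
      exact ⟨u, hu, hb.symm⟩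
    choose g hg1 hg2 using hrep
    have hginj : Function.Injective g := by
      intro b b' h
      apply Subtype.ext
      rw [hg2 b, hg2 b', h]
    haveI := hB₀fin.to_subtype
    have hsub2 : ¬ {u : ∀ i : Fin k, Fin (d i) → ℕ | ∀ i, ∑ j, u i j ≤ s i} ⊆
        Set.range g := by
      intro hsub
      have h1 : {u : ∀ i : Fin k, Fin (d i) → ℕ | ∀ i, ∑ j, u i j ≤ s i}.ncard ≤
          (Set.range g).ncard := Set.ncard_le_ncard hsub (Set.finite_range g)
      have h2 : (Set.range g).ncard ≤ B₀.ncard := by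
        rw [← Set.image_univ]
        calc (g '' univ).ncard ≤ (univ : Set B₀).ncard :=
              Set.ncard_image_le (Set.toFinite _)
          _ = Nat.card B₀ := Set.ncard_univ _
          _ = B₀.ncard := rfl
      rw [cntLe_eq] at hlt
      exact absurd (h1.trans h2) (not_le.mpr hlt)
    obtain ⟨r, hrS, hrg⟩ := not_subset.mp hsub2
    refine ⟨r, ?_⟩
    have h1 : opPow φ r a ∈ M.cl (PhiLe φ s B ∪ B₀) :=
      hB₀.2.2 (by rw [phile_singleton]; exact ⟨r, hrS, rfl⟩)
    refine M.cl_mono ?_ h1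
    intro x hx
    rcases hx with hx | hx
    · rcases hx with ⟨u, _, b, hb, rfl⟩
      exact Or.inl ⟨u, b, hb, rfl⟩
    · right
      refine ⟨g ⟨x, hx⟩, ?_, hg2 ⟨x, hx⟩⟩
      intro h
      exact hrg ⟨⟨x, hx⟩, h⟩
  · rintro ⟨r, hr⟩
    obtain ⟨F, hFsub, hFfin, hFcl⟩ := M.cl_finChar _ _ hr
    have hw : ∀ x, ∃ u : ∀ i : Fin k, Fin (d i) → ℕ,
        x ∈ F → ((∃ b ∈ B, x = opPow φ u b) ∨ (u ≠ r ∧ x = opPow φ u a)) := by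
      intro x
      by_cases hx : x ∈ F
      · rcases hFsub hx with ⟨u, b, hb, hxe⟩ | ⟨u, hu, hxe⟩
        exacts [⟨u, fun _ => Or.inl ⟨b, hb, hxe⟩⟩, ⟨u, fun _ => Or.inr ⟨hu, hxe⟩⟩]
      · exact ⟨r, fun h => absurd h hx⟩
    choose w hw using hw
    set s : Fin k → ℕ :=
      fun i => (∑ j, r i j) ⊔ hFfin.toFinset.sup (fun x => ∑ j, w x i j) with hs
    have hsr : ∀ i, ∑ j, r i j ≤ s i := fun i => le_sup_left
    have hsw : ∀ x ∈ F, ∀ i, ∑ j, w x i j ≤ s i := by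
      intro x hx i
      exact le_trans
        (Finset.le_sup (f := fun x => ∑ j, w x i j) (hFfin.mem_toFinset.mpr hx))
        le_sup_right
    set Sne := {u : ∀ i : Fin k, Fin (d i) → ℕ | (∀ i, ∑ j, u i j ≤ s i) ∧ u ≠ r}
      with hSne
    set D := (fun u => opPow φ u a) '' Sne with hD
    set A := PhiLe φ s B with hA
    have hFAD : F ⊆ A ∪ D := by
      intro x hx
      rcases hw x hx with ⟨b, hb, hxb⟩ | ⟨hur, hxa⟩
      · exact Or.inl ⟨w x, hsw x hx, b, hb, hxb⟩
      · exact Or.inr ⟨w x, ⟨hsw x hx, hur⟩, hxa.symm⟩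
    have hrAD : opPow φ r a ∈ M.cl (A ∪ D) := M.cl_mono hFAD hFcl
    have hSfin : {u : ∀ i : Fin k, Fin (d i) → ℕ | ∀ i, ∑ j, u i j ≤ s i}.Finite :=
      sfull_finite s
    have hSneFin : Sne.Finite := hSfin.subset (fun u hu => hu.1)
    have hDfin : D.Finite := hSneFin.image _
    obtain ⟨B₀, hB₀⟩ := M.exists_basisOver A D hDfin
    have hDC : D ⊆ PhiLe φ s {a} := by
      rintro x ⟨u, hu, rfl⟩
      rw [phile_singleton]; exact ⟨u, hu.1, rfl⟩
    have hADcl : A ∪ D ⊆ M.cl (A ∪ B₀) := by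
      intro x hx
      rcases hx with hx | hx
      · exact M.subset_cl _ (Or.inl hx)
      · exact hB₀.2.2 hx
    have hCspan : PhiLe φ s {a} ⊆ M.cl (A ∪ B₀) := by
      intro x hx
      rw [phile_singleton] at hx
      rcases hx with ⟨u, hu, rfl⟩
      by_cases hur : u = r
      · subst hur
        have h2 := M.cl_mono hADcl hrAD
        rw [M.cl_idem] at h2
        exact h2
      · exact hADcl (Or.inr ⟨u, ⟨hu, hur⟩, rfl⟩)
    have hbasisC : M.IsBasisOver A (PhiLe φ s {a}) B₀ :=
      ⟨hB₀.1.trans hDC, hB₀.2.1, hCspan⟩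
    refine ⟨s, lt_of_le_of_lt (M.rk_le_of_basis hbasisC) ?_⟩
    have h1 : B₀.ncard ≤ D.ncard := Set.ncard_le_ncard hB₀.1 hDfin
    have h2 : D.ncard ≤ Sne.ncard := Set.ncard_image_le hSneFin
    have h3 : Sne.ncard <
        {u : ∀ i : Fin k, Fin (d i) → ℕ | ∀ i, ∑ j, u i j ≤ s i}.ncard := by
      refine Set.ncard_lt_ncard ⟨fun u hu => hu.1, ?_⟩ hSfin
      intro hsub
      exact (hsub hsr).2 rfl
    rw [cntLe_eq]
    exact lt_of_le_of_lt (h1.trans h2) h3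
end
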